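/- Let Φ : I → ℝ be a convex function on an interval I of positive real numbers that is continuously differentiable on the interior of I, let T, V be bounded linear invertible operators on a complex Hilbert space H, and let 0 < m < M with [m², M²] contained in the interior of I and m‖Tx‖ ≤ ‖Vx‖ ≤ M‖Tx‖ for all x ∈ H. Then for every x ∈ H with x ≠ 0, writing r := ‖Vx‖²/‖Tx‖², in the operator order: ⊙_Φ(V,T) ≤ Φ(r)|T|² + ⊙_{Φ'·ℓ}(V,T) − r·⊙_{Φ'}(V,T) ≤ Φ(r)|T|² + Φ'(r)(|V|² − r|T|²) + [Φ'(M²) − Φ'(m²)]·⊙_{|·|,r}(V,T), where ⊙_{|·|,r}(V,T) := T* |(T*)⁻¹(|V|² − r|T|²)T⁻¹| T, ℓ is the identity function, ⊙_{Φ'·ℓ}(V,T) = T* (Φ'(X)·X) T and ⊙_{Φ'}(V,T) = T* Φ'(X) T with X = |VT⁻¹|². -/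

import Mathlib

set_option maxHeartbeats 1000000
set_option synthInstance.maxHeartbeats 400000


variable {H : Type*} [NormedAddCommGroup H] [InnerProductSpace ℂ H] [CompleteSpace H]

/-- `X = |VT⁻¹|² = (T*)⁻¹ V* V T⁻¹`. -/
noncomputable def qX (V T : (H →L[ℂ] H)ˣ) : H →L[ℂ] H :=
  star (↑(T⁻¹) : H →L[ℂ] H) * (star (V : H →L[ℂ] H) * (V : H →L[ℂ] H)) * (↑(T⁻¹) : H →L[ℂ] H)

/-- The quadratic operator perspective `⊙_Φ(V,T) = T* Φ(X) T`. -/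
noncomputable def qPersp (Φ : ℝ → ℝ) (V T : (H →L[ℂ] H)ˣ) : H →L[ℂ] H :=
  star (T : H →L[ℂ] H) * cfc Φ (qX V T) * (T : H →L[ℂ] H)

/-- `|T|² = T*T`. -/
noncomputable def modSq (T : (H →L[ℂ] H)ˣ) : H →L[ℂ] H :=
  star (T : H →L[ℂ] H) * (T : H →L[ℂ] H)

/-- `⊙_{|·|,t}(V,T) = T* |X - t·1| T`. -/
noncomputable def qAbsPersp (t : ℝ) (V T : (H →L[ℂ] H)ˣ) : H →L[ℂ] H :=
  star (T : H →L[ℂ] H) * cfc (fun s : ℝ => |s|) (qX V T - t • (1 : H →L[ℂ] H)) *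
    (T : H →L[ℂ] H)

lemma const_smul_one_eq_cfc {A : H →L[ℂ] H} (hA : IsSelfAdjoint A) (c : ℝ) :
    cfc (fun _ : ℝ => c) A = c • (1 : H →L[ℂ] H) := by
  rw [cfc_const c A hA, Algebra.algebraMap_eq_smul_one]

lemma smul_one_isSelfAdjoint (c : ℝ) : IsSelfAdjoint (c • (1 : H →L[ℂ] H)) := by
  rw [Algebra.smul_def]
  rw [mul_one]
  exact IsSelfAdjoint.algebraMap (H →L[ℂ] H) (star_trivial c)

theorem stmt10 (I : Set ℝ) (hIpos : I ⊆ Set.Ioi 0)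
    (Φ Φ' : ℝ → ℝ) (hΦ : ConvexOn ℝ I Φ)
    (hΦ' : ∀ s ∈ interior I, HasDerivAt Φ (Φ' s) s)
    (hΦ'c : ContinuousOn Φ' (interior I))
    (T V : (H →L[ℂ] H)ˣ) (m M : ℝ) (hm : 0 < m) (hmM : m < M)
    (hsub : Set.Icc (m ^ 2) (M ^ 2) ⊆ interior I)
    (hTV : ∀ x : H, m * ‖(T : H →L[ℂ] H) x‖ ≤ ‖(V : H →L[ℂ] H) x‖ ∧ ‖(V : H →L[ℂ] H) x‖ ≤ M * ‖(T : H →L[ℂ] H) x‖)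
    (x : H) (hx : x ≠ 0) (r : ℝ) (hr : r = ‖(V : H →L[ℂ] H) x‖ ^ 2 / ‖(T : H →L[ℂ] H) x‖ ^ 2) :
    qPersp Φ V T ≤
        Φ r • modSq T + qPersp (fun s => Φ' s * s) V T - r • qPersp Φ' V T ∧
      Φ r • modSq T + qPersp (fun s => Φ' s * s) V T - r • qPersp Φ' V T ≤
        Φ r • modSq T + Φ' r • (modSq V - r • modSq T) +
          (Φ' (M ^ 2) - Φ' (m ^ 2)) • qAbsPersp r V T := by
  set Top : H →L[ℂ] H := (T : H →L[ℂ] H) with hTopDef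
  set Vop : H →L[ℂ] H := (V : H →L[ℂ] H) with hVopDef
  set Tinv : H →L[ℂ] H := (↑(T⁻¹) : H →L[ℂ] H) with hTinvDef
  set A : H →L[ℂ] H := Vop * Tinv with hAdef
  set X : H →L[ℂ] H := qX V T with hXdef
  have hXeq : X = star A * A := by
    simp [hXdef, hAdef, qX, star_mul, mul_assoc, hTinvDef, hVopDef]
  have hXsa : IsSelfAdjoint X := hXeq ▸ IsSelfAdjoint.star_mul_self A
  have hTinvT : Tinv * Top = 1 := by
    rw [hTinvDef, hTopDef, ← Units.val_mul, inv_mul_cancel, Units.val_one]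
  have hTTinv : Top * Tinv = 1 := by
    rw [hTinvDef, hTopDef, ← Units.val_mul, mul_inv_cancel, Units.val_one]
  -- norm bounds for A
  have hAnorm : ∀ y : H, m * ‖y‖ ≤ ‖A y‖ ∧ ‖A y‖ ≤ M * ‖y‖ := by
    intro y
    have hTz : Top (Tinv y) = y := by
      have := congrFun (congrArg DFunLike.coe hTTinv) y
      simpa [ContinuousLinearMap.mul_apply] using this
    have hAy : A y = Vop (Tinv y) := by
      simp [hAdef, ContinuousLinearMap.mul_apply]
    have h := hTV (Tinv y)
    rw [hTz, ← hAy] at h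
    exact h
  -- inner product formulas
  have hXinner : ∀ y : H, RCLike.re (inner ℂ (X y) y : ℂ) = ‖A y‖ ^ 2 := by
    intro y
    rw [hXeq, ContinuousLinearMap.mul_apply, ContinuousLinearMap.star_eq_adjoint,
      ContinuousLinearMap.adjoint_inner_left, inner_self_eq_norm_sq]
  have hCinner : ∀ (c : ℝ) (y : H),
      RCLike.re (inner ℂ ((c • (1 : H →L[ℂ] H)) y) y : ℂ) = c * ‖y‖ ^ 2 := by
    intro c y
    rw [ContinuousLinearMap.smul_apply, ContinuousLinearMap.one_apply,
      RCLike.real_smul_eq_coe_smul (K := ℂ), inner_smul_left]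
    simp [inner_self_eq_norm_sq]
    left; rw [← Complex.ofReal_pow, Complex.ofReal_re]
  -- operator bounds
  have hlow : (m ^ 2) • (1 : H →L[ℂ] H) ≤ X := by
    rw [ContinuousLinearMap.le_def]
    refine ⟨(hXsa.sub (smul_one_isSelfAdjoint _)).isSymmetric, fun y => ?_⟩
    rw [ContinuousLinearMap.reApplyInnerSelf_apply, ContinuousLinearMap.sub_apply,
      inner_sub_left, map_sub, hXinner, hCinner]
    have h1 := (hAnorm y).1
    nlinarith [mul_le_mul h1 h1 (by positivity) (norm_nonneg (A y)), norm_nonneg y, hm.le]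
  have hup : X ≤ (M ^ 2) • (1 : H →L[ℂ] H) := by
    rw [ContinuousLinearMap.le_def]
    refine ⟨((smul_one_isSelfAdjoint _).sub hXsa).isSymmetric, fun y => ?_⟩
    rw [ContinuousLinearMap.reApplyInnerSelf_apply, ContinuousLinearMap.sub_apply,
      inner_sub_left, map_sub, hXinner, hCinner]
    have h2 := (hAnorm y).2
    have hM0 : (0:ℝ) ≤ M := (hm.trans hmM).le
    nlinarith [mul_le_mul h2 h2 (norm_nonneg (A y)) (by positivity), norm_nonneg y]
  -- spectrum bound
  have hspec : spectrum ℝ X ⊆ Set.Icc (m ^ 2) (M ^ 2) := by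
    intro s hs
    constructor
    · have h1 : (0 : H →L[ℂ] H) ≤ X - algebraMap ℝ _ (m ^ 2) := by
        rw [Algebra.algebraMap_eq_smul_one]
        exact sub_nonneg.2 hlow
      have hsa1 : IsSelfAdjoint (X - algebraMap ℝ (H →L[ℂ] H) (m ^ 2)) := by
        rw [Algebra.algebraMap_eq_smul_one]
        exact hXsa.sub (smul_one_isSelfAdjoint _)
      have h2 := (StarOrderedRing.nonneg_iff_spectrum_nonneg (R := ℝ) _ hsa1).mp h1
      have h3 : s - m ^ 2 ∈ spectrum ℝ (X - algebraMap ℝ (H →L[ℂ] H) (m ^ 2)) := by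
        rw [← spectrum.sub_singleton_eq]
        exact Set.sub_mem_sub hs rfl
      linarith [h2 _ h3]
    · have h1 : (0 : H →L[ℂ] H) ≤ algebraMap ℝ _ (M ^ 2) - X := by
        rw [Algebra.algebraMap_eq_smul_one]
        exact sub_nonneg.2 hup
      have hsa1 : IsSelfAdjoint (algebraMap ℝ (H →L[ℂ] H) (M ^ 2) - X) := by
        rw [Algebra.algebraMap_eq_smul_one]
        exact (smul_one_isSelfAdjoint _).sub hXsa
      have h2 := (StarOrderedRing.nonneg_iff_spectrum_nonneg (R := ℝ) _ hsa1).mp h1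
      have h3 : M ^ 2 - s ∈ spectrum ℝ (algebraMap ℝ (H →L[ℂ] H) (M ^ 2) - X) := by
        rw [← spectrum.singleton_sub_eq]
        exact Set.sub_mem_sub rfl hs
      linarith [h2 _ h3]
  -- r is in the interval
  have hTx : (0 : ℝ) < ‖Top x‖ := by
    rcases eq_or_lt_of_le (norm_nonneg (Top x)) with h | h
    · exfalso
      apply hx
      have hTx0 : Top x = 0 := by simpa using h.symm
      have : Tinv (Top x) = x := by
        have := congrFun (congrArg DFunLike.coe hTinvT) x
        simpa [ContinuousLinearMap.mul_apply] using this
      rw [← this, hTx0, map_zero]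
    · exact h
  have hrmem : r ∈ Set.Icc (m ^ 2) (M ^ 2) := by
    obtain ⟨h1, h2⟩ := hTV x
    constructor
    · rw [hr, le_div_iff₀ (by positivity)]
      nlinarith [mul_le_mul h1 h1 (by positivity) (norm_nonneg (Vop x)), hm.le]
    · rw [hr, div_le_iff₀ (by positivity)]
      nlinarith [mul_le_mul h2 h2 (norm_nonneg (Vop x)) (mul_nonneg (hm.trans hmM).le (norm_nonneg (Top x))), (hm.trans hmM).le]
  have hrI : r ∈ interior I := hsub hrmem
  have hrI' : r ∈ I := interior_subset hrI
  -- continuity on the spectrum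
  have hSsub : spectrum ℝ X ⊆ interior I := hspec.trans hsub
  have hΦ'S : ContinuousOn Φ' (spectrum ℝ X) := hΦ'c.mono hSsub
  have hΦS : ContinuousOn Φ (spectrum ℝ X) := fun s hs =>
    ((hΦ' s (hSsub hs)).continuousAt).continuousWithinAt
  have hgS : ContinuousOn (fun s => Φ' s * s) (spectrum ℝ X) := hΦ'S.mul continuousOn_id
  have hhS : ContinuousOn (fun s => Φ r + (Φ' s * s - r * Φ' s)) (spectrum ℝ X) :=
    continuousOn_const.add (hgS.sub (continuousOn_const.mul hΦ'S))
  have hkS : ContinuousOn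
      (fun s => Φ r + (Φ' r * (s - r) + (Φ' (M ^ 2) - Φ' (m ^ 2)) * |s - r|))
      (spectrum ℝ X) := by
    apply continuousOn_const.add
    exact (continuousOn_const.mul ((continuousOn_id.sub continuousOn_const))).add
      (continuousOn_const.mul ((continuousOn_id.sub continuousOn_const).abs))
  -- monotonicity of Φ' on [m², M²]
  have hmono : ∀ a b : ℝ, a ∈ Set.Icc (m ^ 2) (M ^ 2) → b ∈ Set.Icc (m ^ 2) (M ^ 2) →
      a ≤ b → Φ' a ≤ Φ' b := by
    intro a b ha hb hab
    rcases eq_or_lt_of_le hab with h | h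
    · rw [h]
    · have haI : a ∈ I := interior_subset (hsub ha)
      have hbI : b ∈ I := interior_subset (hsub hb)
      have h1 := hΦ.le_slope_of_hasDerivAt haI hbI h (hΦ' a (hsub ha))
      have h2 := hΦ.slope_le_of_hasDerivAt haI hbI h (hΦ' b (hsub hb))
      exact h1.trans h2
  -- gradient inequality
  have hgrad : ∀ s ∈ spectrum ℝ X, Φ s ≤ Φ r + (Φ' s * s - r * Φ' s) := by
    intro s hs
    have hsIcc := hspec hs
    have hsI : s ∈ I := interior_subset (hsub hsIcc)
    rcases lt_trichotomy s r with h | h | h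
    · have h1 := hΦ.le_slope_of_hasDerivAt hsI hrI' h (hΦ' s (hsub hsIcc))
      rw [slope_def_field] at h1
      have h2 : Φ' s * (r - s) ≤ Φ r - Φ s := by
        rw [← le_div_iff₀ (by linarith)] ; linarith [h1]
      nlinarith
    · subst h; ring_nf; nlinarith
    · have h1 := hΦ.slope_le_of_hasDerivAt hrI' hsI h (hΦ' s (hsub hsIcc))
      rw [slope_def_field] at h1
      have h2 : Φ s - Φ r ≤ Φ' s * (s - r) := by
        rw [← div_le_iff₀ (by linarith)] ; linarith [h1]
      nlinarith
  -- second scalar inequality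
  have hhk : ∀ s ∈ spectrum ℝ X,
      Φ r + (Φ' s * s - r * Φ' s) ≤
        Φ r + (Φ' r * (s - r) + (Φ' (M ^ 2) - Φ' (m ^ 2)) * |s - r|) := by
    intro s hs
    have hsIcc := hspec hs
    rcases le_total s r with h | h
    · rw [abs_of_nonpos (by linarith)]
      have h1 := hmono s r hsIcc hrmem h
      have h2 := hmono (m ^ 2) s (Set.left_mem_Icc.2 (by nlinarith [hm.le, hmM.le])) hsIcc hsIcc.1
      have h3 := hmono r (M ^ 2) hrmem (Set.right_mem_Icc.2 (by nlinarith [hm.le, hmM.le])) hrmem.2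
      nlinarith
    · rw [abs_of_nonneg (by linarith)]
      have h1 := hmono r s hrmem hsIcc h
      have h2 := hmono (m ^ 2) r (Set.left_mem_Icc.2 (by nlinarith [hm.le, hmM.le])) hrmem hrmem.1
      have h3 := hmono s (M ^ 2) hsIcc (Set.right_mem_Icc.2 (by nlinarith [hm.le, hmM.le])) hsIcc.2
      nlinarith
  -- operator identities
  have hmidfun : cfc (fun s => Φ r + (Φ' s * s - r * Φ' s)) X
      = Φ r • 1 + (cfc (fun s => Φ' s * s) X - r • cfc Φ' X) := by
    rw [cfc_const_add (Φ r) (fun s => Φ' s * s - r * Φ' s) X (hgS.sub (continuousOn_const.mul hΦ'S)) hXsa,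
      cfc_sub (fun s => Φ' s * s) (fun s => r * Φ' s) X hgS (continuousOn_const.mul hΦ'S),
      cfc_const_mul _ _ _ hΦ'S, Algebra.algebraMap_eq_smul_one]
  have hmid : Φ r • modSq T + qPersp (fun s => Φ' s * s) V T - r • qPersp Φ' V T
      = star Top * cfc (fun s => Φ r + (Φ' s * s - r * Φ' s)) X * Top := by
    rw [hmidfun]
    simp only [qPersp, modSq, ← hXdef, ← hTopDef, mul_add, add_mul, mul_sub, sub_mul,
      mul_smul_comm, smul_mul_assoc, mul_one, one_mul]
    abel
  -- modSq V = T* X T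
  have hATop : A * Top = Vop := by rw [hAdef, mul_assoc, hTinvT, mul_one]
  have hVX : modSq V = star Top * X * Top := by
    rw [hXeq, modSq, ← hVopDef, ← hATop]
    simp [star_mul, mul_assoc]
  -- X - r•1 as cfc
  have hsubr : X - r • (1 : H →L[ℂ] H) = cfc (fun s : ℝ => s - r) X := by
    rw [cfc_sub (fun s : ℝ => s) (fun _ : ℝ => r) X (by fun_prop) (by fun_prop),
      cfc_id' ℝ X hXsa, const_smul_one_eq_cfc hXsa]
  have habs : cfc (fun s : ℝ => |s|) (X - r • (1 : H →L[ℂ] H))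
      = cfc (fun s : ℝ => |s - r|) X := by
    rw [hsubr, ← cfc_comp' (fun s : ℝ => |s|) (fun s : ℝ => s - r) X
      (continuous_abs.continuousOn) (by fun_prop) hXsa]
  have hrhsfun : cfc (fun s => Φ r + (Φ' r * (s - r) + (Φ' (M ^ 2) - Φ' (m ^ 2)) * |s - r|)) X
      = Φ r • 1 + (Φ' r • cfc (fun s : ℝ => s - r) X
        + (Φ' (M ^ 2) - Φ' (m ^ 2)) • cfc (fun s : ℝ => |s - r|) X) := by
    have hc1 : ContinuousOn (fun s : ℝ => Φ' r * (s - r)) (spectrum ℝ X) :=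
      continuousOn_const.mul (continuousOn_id.sub continuousOn_const)
    have hc2 : ContinuousOn (fun s : ℝ => (Φ' (M ^ 2) - Φ' (m ^ 2)) * |s - r|)
        (spectrum ℝ X) :=
      continuousOn_const.mul (continuousOn_id.sub continuousOn_const).abs
    rw [cfc_const_add (Φ r) (fun s => Φ' r * (s - r) + (Φ' (M ^ 2) - Φ' (m ^ 2)) * |s - r|) X (hc1.add hc2) hXsa, cfc_add X _ _ hc1 hc2,
      cfc_const_mul (Φ' r) (fun s : ℝ => s - r) X (by fun_prop),
      cfc_const_mul (Φ' (M ^ 2) - Φ' (m ^ 2)) (fun s : ℝ => |s - r|) X (by fun_prop),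
      Algebra.algebraMap_eq_smul_one]
  have hrhs : Φ r • modSq T + Φ' r • (modSq V - r • modSq T) +
      (Φ' (M ^ 2) - Φ' (m ^ 2)) • qAbsPersp r V T
      = star Top * cfc (fun s => Φ r + (Φ' r * (s - r)
          + (Φ' (M ^ 2) - Φ' (m ^ 2)) * |s - r|)) X * Top := by
    rw [hrhsfun]
    have hq : qAbsPersp r V T = star Top * cfc (fun s : ℝ => |s - r|) X * Top := by
      rw [qAbsPersp, ← hXdef, ← hTopDef, habs]
    rw [hq, hVX, ← hsubr]
    simp only [modSq, ← hTopDef, mul_add, add_mul, mul_sub, sub_mul,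
      mul_smul_comm, smul_mul_assoc, mul_one, one_mul, smul_sub]
    abel
  constructor
  · rw [hmid]
    have h1 : cfc Φ X ≤ cfc (fun s => Φ r + (Φ' s * s - r * Φ' s)) X :=
      cfc_mono hgrad hΦS hhS
    have h2 := star_left_conjugate_le_conjugate h1 Top
    have hLHS : qPersp Φ V T = star Top * cfc Φ X * Top := rfl
    rw [hLHS]
    exact h2
  · rw [hmid, hrhs]
    have h1 : cfc (fun s => Φ r + (Φ' s * s - r * Φ' s)) X ≤
        cfc (fun s => Φ r + (Φ' r * (s - r) + (Φ' (M ^ 2) - Φ' (m ^ 2)) * |s - r|)) X :=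
      cfc_mono hhk hhS hkS
    exact star_left_conjugate_le_conjugate h1 Top
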